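/- Weak duality for the fair allocation program. Let W_OPT be the supremum, over all feasible decision tuples (x_1,…,x_T) (i.e. each x_t ∈ {0,1}^I with ∑_{i∈I} x_{t,i} = K, and the cumulative exposure vector e := ∑_{t=1}^T Mᵀx_t satisfies e ≤ γ componentwise), of the objective (1/T)∑_{t=1}^T s_tᵀx_t + λ·min_{p∈P} (e_p/γ_p). Then for every μ ∈ ℝ^P with r*(−μ) < ∞, one has W_OPT ≤ g*(Mμ) + λ·r*(−μ); consequently W_OPT ≤ inf over all such μ of g*(Mμ) + λ·r*(−μ). -/
import Mathlib


open Finset Matrix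

/-- Weak duality for the fair allocation program: for every dual-feasible `μ`
(i.e. `r*(-μ) < ∞`, expressed as boundedness of the defining set), every feasible
decision tuple `x` has objective value at most `g*(Mμ) + λ·r*(-μ)`;
hence `W_OPT ≤ g*(Mμ) + λ·r*(-μ)` and consequently `W_OPT` is at most the
infimum of the right-hand side over all such `μ`. -/
theorem weak_duality_fair_allocation
    {I P : Type*} [Fintype I] [Fintype P] [Nonempty I] [Nonempty P]
    (T K : ℕ) (hT : 1 ≤ T) (hK1 : 1 ≤ K) (hK2 : K ≤ Fintype.card I)
    (lam : ℝ) (hlam : 0 < lam)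
    (γ : P → ℝ) (hγ : ∀ p, 0 < γ p)
    (s : Fin T → I → ℝ)
    (M : Matrix I P ℝ) (hM : ∀ i p, M i p = 0 ∨ M i p = 1)
    -- the conjugate g* of the user-utility part
    (gstar : (I → ℝ) → ℝ)
    (hgstar : ∀ c : I → ℝ, gstar c = sSup {w : ℝ | ∃ y : Fin T → I → ℝ,
      (∀ t i, y t i = 0 ∨ y t i = 1) ∧ (∀ t, ∑ i, y t i = (K : ℝ)) ∧
      w = ∑ t, ((∑ i, s t i * y t i) / (T : ℝ) - ∑ i, c i * y t i)})
    -- the conjugate r*(-·) of the max-min regularizer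
    (rstar : (P → ℝ) → ℝ)
    (hrstar : ∀ μ : P → ℝ, rstar μ = sSup {w : ℝ | ∃ e : P → ℝ, (∀ p, e p ≤ γ p) ∧
      w = (Finset.univ.inf' Finset.univ_nonempty fun p => e p / γ p)
        + (∑ p, μ p * e p) / lam})
    -- a dual-feasible μ : r*(-μ) < ∞
    (μ : P → ℝ)
    (hμfeas : BddAbove {w : ℝ | ∃ e : P → ℝ, (∀ p, e p ≤ γ p) ∧
      w = (Finset.univ.inf' Finset.univ_nonempty fun p => e p / γ p)
        + (∑ p, μ p * e p) / lam})
    -- a feasible primal decision tuple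
    (x : Fin T → I → ℝ)
    (hx01 : ∀ t i, x t i = 0 ∨ x t i = 1)
    (hxK : ∀ t, ∑ i, x t i = (K : ℝ))
    (hres : ∀ p, ∑ t, ∑ i, M i p * x t i ≤ γ p) :
    (1 / (T : ℝ)) * (∑ t, ∑ i, s t i * x t i)
      + lam * (Finset.univ.inf' Finset.univ_nonempty fun p =>
          (∑ t, ∑ i, M i p * x t i) / γ p)
      ≤ gstar (M.mulVec μ) + lam * rstar μ := by
  have hTpos : (0:ℝ) < T := by exact_mod_cast hT
  set c : I → ℝ := M.mulVec μ with hc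
  set e : P → ℝ := fun p => ∑ t, ∑ i, M i p * x t i with he
  have hwr_le : (Finset.univ.inf' Finset.univ_nonempty fun p => e p / γ p)
      + (∑ p, μ p * e p) / lam ≤ rstar μ := by
    rw [hrstar]
    exact le_csSup hμfeas ⟨e, hres, rfl⟩
  have hbdd : BddAbove {w : ℝ | ∃ y : Fin T → I → ℝ,
      (∀ t i, y t i = 0 ∨ y t i = 1) ∧ (∀ t, ∑ i, y t i = (K : ℝ)) ∧
      w = ∑ t, ((∑ i, s t i * y t i) / (T : ℝ) - ∑ i, c i * y t i)} := by
    refine ⟨∑ t, ((∑ i, |s t i|) / (T : ℝ) + ∑ i, |c i|), ?_⟩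
    rintro w ⟨y, hy01, hyK, rfl⟩
    apply Finset.sum_le_sum
    intro t _
    have h1 : ∑ i, s t i * y t i ≤ ∑ i, |s t i| := by
      apply Finset.sum_le_sum
      intro i _
      rcases hy01 t i with h | h
      · simp [h, abs_nonneg]
      · simpa [h] using le_abs_self (s t i)
    have h2 : -(∑ i, |c i|) ≤ ∑ i, c i * y t i := by
      rw [← Finset.sum_neg_distrib]
      apply Finset.sum_le_sum
      intro i _
      rcases hy01 t i with h | h
      · simp [h, abs_nonneg]
      · simpa [h] using neg_abs_le (c i)
    have h3 : (∑ i, s t i * y t i) / (T : ℝ) ≤ (∑ i, |s t i|) / (T : ℝ) := by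
      gcongr
    linarith
  have hwg_le : ∑ t, ((∑ i, s t i * x t i) / (T : ℝ) - ∑ i, c i * x t i)
      ≤ gstar c := by
    rw [hgstar]
    exact le_csSup hbdd ⟨x, hx01, hxK, rfl⟩
  have hswap : ∑ t, ∑ i, c i * x t i = ∑ p, μ p * e p := by
    calc ∑ t, ∑ i, c i * x t i
        = ∑ t, ∑ i, ∑ p, μ p * (M i p * x t i) := by
          refine Finset.sum_congr rfl fun t _ => Finset.sum_congr rfl fun i _ => ?_
          rw [hc]
          simp only [Matrix.mulVec, dotProduct, Finset.sum_mul]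
          exact Finset.sum_congr rfl fun p _ => by ring
      _ = ∑ t, ∑ p, ∑ i, μ p * (M i p * x t i) :=
          Finset.sum_congr rfl fun t _ => Finset.sum_comm
      _ = ∑ p, ∑ t, ∑ i, μ p * (M i p * x t i) := Finset.sum_comm
      _ = ∑ p, μ p * e p := by
          refine Finset.sum_congr rfl fun p _ => ?_
          simp [he, Finset.mul_sum]
  have key : (1 / (T : ℝ)) * (∑ t, ∑ i, s t i * x t i)
      + lam * (Finset.univ.inf' Finset.univ_nonempty fun p =>
          (∑ t, ∑ i, M i p * x t i) / γ p)
      = (∑ t, ((∑ i, s t i * x t i) / (T : ℝ) - ∑ i, c i * x t i))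
        + lam * ((Finset.univ.inf' Finset.univ_nonempty fun p => e p / γ p)
          + (∑ p, μ p * e p) / lam) := by
    have h4 : (Finset.univ.inf' Finset.univ_nonempty fun p =>
        (∑ t, ∑ i, M i p * x t i) / γ p)
        = (Finset.univ.inf' Finset.univ_nonempty fun p => e p / γ p) := rfl
    rw [h4, Finset.sum_sub_distrib, hswap, ← Finset.sum_div]
    field_simp
    ring
  rw [key]
  have := mul_le_mul_of_nonneg_left hwr_le hlam.le
  linarith
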